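/- Let D be a 3-dicritical semi-complete digraph. Then every arc of D either belongs to a digon or is contained in an induced directed triangle of D. -/

import Mathlib

/-- A (loopless, simple) digraph on vertex type `V`. -/
structure SimpleDigraph (V : Type) where
  Adj : V → V → Prop
  loopless : ∀ v, ¬ Adj v v

namespace SimpleDigraph

/-- A set of arcs (given as a relation) is acyclic if it admits no directed closed walk. -/
def AcyclicRel {V : Type} (A : V → V → Prop) : Prop :=
  ∀ v, ¬ Relation.TransGen A v v

/-- A set of arcs is 2-dicolourable if the vertices can be coloured with two colours
so that each colour class induces an acyclic subdigraph. -/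
def Dicolourable2Rel {V : Type} (A : V → V → Prop) : Prop :=
  ∃ φ : V → Fin 2, ∀ i : Fin 2,
    AcyclicRel (fun a b => A a b ∧ φ a = i ∧ φ b = i)

/-- A digraph is 2-dicolourable if its vertices can be coloured with two colours
so that each colour class induces an acyclic subdigraph. -/
def Dicolourable2 {V : Type} (D : SimpleDigraph V) : Prop :=
  Dicolourable2Rel D.Adj

/-- `(S, A)` describes a subdigraph of `D`: its vertex set is `S` and its arcs
are given by `A`, which must join vertices of `S` and be arcs of `D`. -/
def IsSubdigraphOn {V : Type} (D : SimpleDigraph V) (S : Set V) (A : V → V → Prop) : Prop :=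
  ∀ u v, A u v → u ∈ S ∧ v ∈ S ∧ D.Adj u v

/-- `D` is 3-dicritical: `D` is not 2-dicolourable, but every proper subdigraph of `D`
(one missing a vertex or an arc) is 2-dicolourable. -/
def Dicritical3 {V : Type} (D : SimpleDigraph V) : Prop :=
  ¬ D.Dicolourable2 ∧
    ∀ (S : Set V) (A : V → V → Prop), D.IsSubdigraphOn S A →
      (S ≠ Set.univ ∨ A ≠ D.Adj) → Dicolourable2Rel A

/-- A digraph is semi-complete if any two distinct vertices are joined by at least one arc. -/
def SemiComplete {V : Type} (D : SimpleDigraph V) : Prop :=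
  ∀ u v : V, u ≠ v → D.Adj u v ∨ D.Adj v u

/-- A tournament is a semi-complete digraph with no digon. -/
def IsTournament {V : Type} (D : SimpleDigraph V) : Prop :=
  D.SemiComplete ∧ ∀ u v : V, ¬ (D.Adj u v ∧ D.Adj v u)

/-- Isomorphism of digraphs. -/
def Iso {V W : Type} (D : SimpleDigraph V) (E : SimpleDigraph W) : Prop :=
  ∃ e : V ≃ W, ∀ u v : V, D.Adj u v ↔ E.Adj (e u) (e v)

/-- `D` contains (a copy of) `H` as a subdigraph. -/
def ContainsSub {V W : Type} (D : SimpleDigraph V) (H : SimpleDigraph W) : Prop :=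
  ∃ f : W → V, Function.Injective f ∧ ∀ a b, H.Adj a b → D.Adj (f a) (f b)

/-- `D` contains (a copy of) `H` as an induced subdigraph. -/
def ContainsInduced {V W : Type} (D : SimpleDigraph V) (H : SimpleDigraph W) : Prop :=
  ∃ f : W → V, Function.Injective f ∧ ∀ a b, H.Adj a b ↔ D.Adj (f a) (f b)

end SimpleDigraph

private lemma split_transGen {V : Type} {R : V → V → Prop} {a b x y : V}
    (h : Relation.TransGen (fun u w => R u w ∨ (u = a ∧ w = b)) x y) :
    Relation.TransGen R x y ∨
      (Relation.ReflTransGen R x a ∧ Relation.ReflTransGen R b y) := by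
  induction h with
  | single h =>
      rcases h with h | ⟨rfl, rfl⟩
      · exact Or.inl (.single h)
      · exact Or.inr ⟨.refl, .refl⟩
  | tail _ hyz IH =>
      rcases hyz with hyz | ⟨rfl, rfl⟩
      · rcases IH with h | ⟨h1, h2⟩
        · exact Or.inl (h.tail hyz)
        · exact Or.inr ⟨h1, h2.tail hyz⟩
      · rcases IH with h | ⟨h1, h2⟩
        · exact Or.inr ⟨h.to_reflTransGen, .refl⟩
        · exact Or.inr ⟨h1, .refl⟩

/-- In a 3-dicritical semi-complete digraph, every arc either belongs
to a digon or is contained in an induced directed triangle. -/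
theorem arc_mem_digon_or_induced_triangle
    {V : Type} [Fintype V] (D : SimpleDigraph V) (hD : D.Dicritical3)
    (hsc : D.SemiComplete) :
    ∀ a b : V, D.Adj a b →
      D.Adj b a ∨
      ∃ c : V, D.Adj b c ∧ D.Adj c a ∧ ¬ D.Adj b a ∧ ¬ D.Adj c b ∧ ¬ D.Adj a c := by
  intro a b hab
  by_cases hba : D.Adj b a
  · exact Or.inl hba
  right
  have hne : a ≠ b := fun h => D.loopless a (h ▸ hab)
  -- the subdigraph obtained by deleting the arc (a,b)
  set A : V → V → Prop := fun u v => D.Adj u v ∧ ¬(u = a ∧ v = b) with hA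
  have hsub : D.IsSubdigraphOn Set.univ A := fun u v h => ⟨trivial, trivial, h.1⟩
  have hAne : A ≠ D.Adj := by
    intro h
    have h2 : A a b := by rw [h]; exact hab
    exact h2.2 ⟨rfl, rfl⟩
  obtain ⟨φ, hφ⟩ := hD.2 Set.univ A hsub (Or.inr hAne)
  set i := φ a with hi
  -- a and b receive the same colour
  have hfab : φ b = i := by
    by_contra hneq
    apply hD.1
    refine ⟨φ, fun j v hv => ?_⟩
    apply hφ j v
    refine Relation.TransGen.mono ?_ _ _ hv
    rintro u w ⟨huw, hu, hw⟩
    refine ⟨⟨huw, ?_⟩, hu, hw⟩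
    rintro ⟨rfl, rfl⟩
    exact hneq (hw.trans (hu.symm.trans hi.symm))
  set R : V → V → Prop := fun u v => A u v ∧ φ u = i ∧ φ v = i with hR
  have hRacyc : ∀ v, ¬ Relation.TransGen R v v := hφ i
  -- D is not 2-dicoloured by φ: some colour class has a cycle
  have hcyc : ∃ j v,
      Relation.TransGen (fun u w => D.Adj u w ∧ φ u = j ∧ φ w = j) v v := by
    by_contra h
    push_neg at h
    exact hD.1 ⟨φ, fun j v => h j v⟩
  obtain ⟨j, v, hv⟩ := hcyc
  have hji : j = i := by
    by_contra hji
    apply hφ j v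
    refine Relation.TransGen.mono ?_ _ _ hv
    rintro u w ⟨huw, hu, hw⟩
    refine ⟨⟨huw, ?_⟩, hu, hw⟩
    rintro ⟨rfl, rfl⟩
    exact hji (hi.trans hu).symm
  subst hji
  -- the cycle splits along the arc (a,b), giving a monochromatic path from b to a
  have hv' : Relation.TransGen (fun u w => R u w ∨ (u = a ∧ w = b)) v v := by
    refine Relation.TransGen.mono ?_ _ _ hv
    rintro u w ⟨huw, hu, hw⟩
    by_cases hab' : u = a ∧ w = b
    · exact Or.inr hab'
    · exact Or.inl ⟨⟨huw, hab'⟩, hu, hw⟩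
  have hbta : Relation.TransGen R b a := by
    rcases split_transGen hv' with hcycR | ⟨hva, hbv⟩
    · exact absurd hcycR (hRacyc v)
    have hba' : Relation.ReflTransGen R b a := hbv.trans hva
    rcases hba'.cases_head with h | ⟨c, hc, hca⟩
    · exact absurd h.symm hne
    · exact Relation.TransGen.head' hc hca
  -- shorten the path to a single intermediate vertex c
  have key : ∀ x, Relation.TransGen R x a → R b x → ∃ c, R b c ∧ R c a := by
    intro x hx
    induction hx using Relation.TransGen.head_induction_on with
    | single h => exact fun hbx => ⟨_, hbx, h⟩
    | head hxy hya IH =>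
        intro hbx
        rename_i x y
        have hyb : y ≠ b := fun hyy =>
          hRacyc b (Relation.TransGen.head hbx (Relation.TransGen.single (hyy ▸ hxy)))
        by_cases hya' : y = a
        · exact ⟨x, hbx, hya' ▸ hxy⟩
        rcases hsc b y (fun h => hyb h.symm) with hby | hyb'
        · refine IH ⟨⟨hby, ?_⟩, hfab, hxy.2.2⟩
          rintro ⟨rfl, -⟩
          exact hne rfl
        · have hRyb : R y b := by
            refine ⟨⟨hyb', ?_⟩, hxy.2.2, hfab⟩
            rintro ⟨rfl, -⟩
            exact hya' rfl
          exact absurd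
            (Relation.TransGen.head hbx
              (Relation.TransGen.head hxy (Relation.TransGen.single hRyb)))
            (hRacyc b)
  obtain ⟨x, hbx, hxa'⟩ := Relation.TransGen.head'_iff.mp hbta
  have hxna : x ≠ a := by
    rintro rfl
    exact hba hbx.1.1
  have hxta : Relation.TransGen R x a := by
    rcases hxa'.cases_head with h | ⟨y, hxy, hya⟩
    · exact absurd h hxna
    · exact Relation.TransGen.head' hxy hya
  obtain ⟨c, hbc, hca⟩ := key x hxta hbx
  have hcna : c ≠ a := fun h => hRacyc a (Relation.TransGen.single (h ▸ hca))
  have hcnb : c ≠ b := fun h => hRacyc b (Relation.TransGen.single (h ▸ hbc))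
  refine ⟨c, hbc.1.1, hca.1.1, hba, ?_, ?_⟩
  · intro h
    have hRcb : R c b := ⟨⟨h, fun hh => hcna hh.1⟩, hbc.2.2, hfab⟩
    exact hRacyc b (Relation.TransGen.head hbc (Relation.TransGen.single hRcb))
  · intro h
    have hRac : R a c := ⟨⟨h, fun hh => hcnb hh.2⟩, hi.symm, hbc.2.2⟩
    exact hRacyc a (Relation.TransGen.head hRac (Relation.TransGen.single hca))
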